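/- Define H(p) = sup { λ ∈ ℝ : ∃ φ ∈ C(𝕋^d), φ > 0, such that −∫_{ℝ^d} J(ξ−η) e^{p·(ξ−η)} κ(ξ,η) φ(η) dη + a(ξ) φ(ξ) ≥ λ φ(ξ) for all ξ }, where J ≥ 0 is continuous with J(0) > 0 and J(z) ≤ C e^{−|z|^{1+β}}, κ > 0 continuous on 𝕋^d × 𝕋^d, a continuous on 𝕋^d. Then H(p) ≤ min_{ξ} a(ξ) for all p ∈ ℝ^d. -/

import Mathlib

open MeasureTheory Set

lemma aux_exp_abs_integrable {c : ℝ} (hc : 0 < c) :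
    Integrable fun x : ℝ => Real.exp (-(c * |x|)) := by
  have h1 : IntegrableOn (fun x : ℝ => Real.exp (-(c * |x|))) (Ioi 0) := by
    refine (exp_neg_integrableOn_Ioi 0 hc).congr_fun (fun x hx => ?_) measurableSet_Ioi
    rw [abs_of_pos hx]; simp only [neg_mul]
  have h2 : IntegrableOn (fun x : ℝ => Real.exp (-(c * |x|))) (Iic 0) := by
    rw [← Measure.map_neg_eq_self (volume : Measure ℝ)]
    have m : MeasurableEmbedding fun x : ℝ => -x :=
      (Homeomorph.neg ℝ).measurableEmbedding
    rw [m.integrableOn_map_iff]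
    simp_rw [Function.comp_def, abs_neg, neg_preimage, neg_Iic, neg_zero]
    exact Iff.mpr integrableOn_Ici_iff_integrableOn_Ioi h1
  have := h2.union h1
  rwa [Iic_union_Ioi, integrableOn_univ] at this

lemma aux_scalar {β P s : ℝ} (hβ : 0 < β) (hP : 0 ≤ P) (hs : 0 ≤ s) :
    -s ^ (1 + β) + P * s ≤ (P + 1) * max 1 ((P + 1) ^ (1 / β)) - s := by
  have hs1 : s ^ (1 + β) = s * s ^ β :=
    Real.rpow_one_add' hs (by positivity)
  set R := max 1 ((P + 1) ^ (1 / β)) with hR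
  have hR1 : (1 : ℝ) ≤ R := le_max_left _ _
  rcases le_or_gt s R with h | h
  · have h1 : (P + 1) * s ≤ (P + 1) * R :=
      mul_le_mul_of_nonneg_left h (by linarith)
    have h2 : 0 ≤ s ^ β := Real.rpow_nonneg hs β
    nlinarith
  · have h2 : (P + 1) ≤ s ^ β := by
      have hle : (P + 1) ^ (1 / β) ≤ s := le_of_lt (lt_of_le_of_lt (le_max_right _ _) h)
      calc P + 1 = ((P + 1) ^ (1 / β)) ^ β := by
            rw [← Real.rpow_mul (by linarith), one_div_mul_cancel hβ.ne', Real.rpow_one]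
        _ ≤ s ^ β := Real.rpow_le_rpow (by positivity) hle hβ.le
    nlinarith [mul_le_mul_of_nonneg_right h2 hs]

lemma aux_reduce {d : ℕ} (x : Fin d → ℝ) :
    ∃ u ∈ Icc (0 : Fin d → ℝ) 1, ∃ l : Fin d → ℤ, (u + fun i => (l i : ℝ)) = x := by
  refine ⟨fun i => Int.fract (x i), ⟨fun i => Int.fract_nonneg _,
    fun i => (Int.fract_lt_one _).le⟩, fun i => ⌊x i⌋, ?_⟩
  funext i
  exact Int.fract_add_floor (x i)

theorem stmt11 (d : ℕ) (J : (Fin d → ℝ) → ℝ) (κ : (Fin d → ℝ) → (Fin d → ℝ) → ℝ)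
    (a : (Fin d → ℝ) → ℝ) (C β : ℝ) (hC : 0 < C) (hβ : 0 < β)
    (hJc : Continuous J) (hJ0 : 0 < J 0)
    (hJbd : ∀ z, 0 ≤ J z ∧ J z ≤ C * Real.exp (-(Real.sqrt (∑ i, z i ^ 2)) ^ (1 + β)))
    (hκc : Continuous fun p : (Fin d → ℝ) × (Fin d → ℝ) => κ p.1 p.2)
    (hκpos : ∀ x y, 0 < κ x y)
    (hκper : ∀ (l : Fin d → ℤ) (x y : Fin d → ℝ),
      κ (x + fun i => (l i : ℝ)) y = κ x y ∧ κ x (y + fun i => (l i : ℝ)) = κ x y)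
    (hac : Continuous a)
    (haper : ∀ (l : Fin d → ℤ) (x : Fin d → ℝ), a (x + fun i => (l i : ℝ)) = a x)
    (p : Fin d → ℝ) :
    sSup {lam : ℝ | ∃ φ : (Fin d → ℝ) → ℝ, Continuous φ ∧
        (∀ (l : Fin d → ℤ) (ξ : Fin d → ℝ), φ (ξ + fun i => (l i : ℝ)) = φ ξ) ∧
        (∀ ξ, 0 < φ ξ) ∧
        ∀ ξ, lam * φ ξ ≤ a ξ * φ ξ -
          ∫ η, J (ξ - η) * Real.exp (∑ i, p i * (ξ i - η i)) * κ ξ η * φ η}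
      ≤ ⨅ ξ : Fin d → ℝ, a ξ := by
  classical
  have h01 : (0 : Fin d → ℝ) ≤ 1 := fun i => zero_le_one
  -- minimum of a on the unit cube, and globally
  obtain ⟨x₀, hx₀K, hx₀min⟩ :=
    isCompact_Icc.exists_isMinOn ⟨0, left_mem_Icc.mpr h01⟩ hac.continuousOn
  have hxmin : ∀ x, a x₀ ≤ a x := by
    intro x
    obtain ⟨u, hu, l, hul⟩ := aux_reduce x
    have h2 : a x = a u := by rw [← hul]; exact haper l u
    exact (hx₀min hu).trans_eq h2.symm
  -- bound on κ
  obtain ⟨q₀, hq₀K, hq₀max⟩ :=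
    (isCompact_Icc.prod isCompact_Icc).exists_isMaxOn
      ⟨(0, 0), ⟨left_mem_Icc.mpr h01, left_mem_Icc.mpr h01⟩⟩ hκc.continuousOn
  set M := κ q₀.1 q₀.2 with hMdef
  have hM : ∀ x y, κ x y ≤ M := by
    intro x y
    obtain ⟨u, hu, l, hul⟩ := aux_reduce x
    obtain ⟨v, hv, l', hvl⟩ := aux_reduce y
    have a1 := (hκper l u y).1
    rw [hul] at a1
    have a2 := (hκper l' u v).2
    rw [hvl] at a2
    calc κ x y = κ u v := a1.trans a2
      _ ≤ M := hq₀max (Set.mk_mem_prod hu hv)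
  have hM0 : 0 < M := hκpos _ _
  -- constants
  set P := Real.sqrt (∑ i, p i ^ 2) with hPdef
  have hP : 0 ≤ P := Real.sqrt_nonneg _
  set B := (P + 1) * max 1 ((P + 1) ^ (1 / β)) with hB
  set c : ℝ := ((d : ℝ) + 1)⁻¹ with hcdef
  have hc : 0 < c := by positivity
  -- integrable majorant
  set G : (Fin d → ℝ) → ℝ :=
    fun z => (C * M * Real.exp B) * ∏ i, Real.exp (-(c * |z i|)) with hGdef
  have hGint : Integrable G :=
    (Integrable.fintype_prod (fun _ => aux_exp_abs_integrable hc)).const_mul _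
  -- key pointwise bound
  have key : ∀ ξ η : Fin d → ℝ,
      J (ξ - η) * Real.exp (∑ i, p i * (ξ i - η i)) * κ ξ η ≤ G (ξ - η) := by
    intro ξ η
    set z : Fin d → ℝ := ξ - η with hz
    have esum : (∑ i, p i * (ξ i - η i)) = ∑ i, p i * z i := rfl
    set s := Real.sqrt (∑ i, z i ^ 2) with hsdef
    have hs : 0 ≤ s := Real.sqrt_nonneg _
    have cs1 : ∑ i, p i * z i ≤ P * s := by
      have h := Finset.sum_mul_sq_le_sq_mul_sq Finset.univ p z
      calc ∑ i, p i * z i ≤ |∑ i, p i * z i| := le_abs_self _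
        _ = Real.sqrt ((∑ i, p i * z i) ^ 2) := (Real.sqrt_sq_eq_abs _).symm
        _ ≤ Real.sqrt ((∑ i, p i ^ 2) * (∑ i, z i ^ 2)) := Real.sqrt_le_sqrt h
        _ = P * s := Real.sqrt_mul (by positivity) _
    have cs2 : ∑ i, |z i| ≤ ((d : ℝ) + 1) * s := by
      have h := Finset.sum_mul_sq_le_sq_mul_sq Finset.univ (fun _ => (1 : ℝ)) (fun i => |z i|)
      simp only [one_mul, one_pow, Finset.sum_const, Finset.card_univ, Fintype.card_fin,
        nsmul_eq_mul, sq_abs] at h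
      have hzz : (0:ℝ) ≤ ∑ i, z i ^ 2 := by positivity
      calc ∑ i, |z i| = Real.sqrt ((∑ i, |z i|) ^ 2) := (Real.sqrt_sq (by positivity)).symm
        _ ≤ Real.sqrt (((d : ℝ) + 1) ^ 2 * (∑ i, z i ^ 2)) := by
            apply Real.sqrt_le_sqrt; nlinarith
        _ = ((d : ℝ) + 1) * s := by
            rw [Real.sqrt_mul (by positivity), Real.sqrt_sq (by positivity)]
    have hJz := (hJbd z).2
    rw [← hsdef] at hJz
    have hJz0 := (hJbd z).1
    have hκb := hM ξ η
    calc J z * Real.exp (∑ i, p i * (ξ i - η i)) * κ ξ η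
        = J z * κ ξ η * Real.exp (∑ i, p i * z i) := by rw [esum]; ring
      _ ≤ (C * Real.exp (-s ^ (1 + β))) * M * Real.exp (∑ i, p i * z i) := by
          apply mul_le_mul_of_nonneg_right _ (Real.exp_pos _).le
          exact mul_le_mul hJz hκb (hκpos _ _).le (by positivity)
      _ = (C * M) * Real.exp (-s ^ (1 + β) + ∑ i, p i * z i) := by
          rw [Real.exp_add]; ring
      _ ≤ (C * M) * Real.exp (B - s) := by
          apply mul_le_mul_of_nonneg_left _ (by positivity)
          apply Real.exp_le_exp.mpr
          have hsc := aux_scalar hβ hP hs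
          rw [← hB] at hsc
          linarith
      _ = (C * M * Real.exp B) * Real.exp (-s) := by
          rw [sub_eq_add_neg, Real.exp_add]; ring
      _ ≤ G z := by
          apply mul_le_mul_of_nonneg_left _ (by positivity)
          rw [← Real.exp_sum]
          apply Real.exp_le_exp.mpr
          have h1 : ∑ i, -(c * |z i|) = -(c * ∑ i, |z i|) := by
            simp [Finset.mul_sum]
          rw [h1, neg_le_neg_iff]
          calc c * ∑ i, |z i| ≤ c * (((d : ℝ) + 1) * s) :=
                mul_le_mul_of_nonneg_left cs2 hc.le
            _ = s := by rw [hcdef]; field_simp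
  -- the constant K
  set K := ∫ z, G z with hKdef
  refine csSup_le ⟨a x₀ - K, ?_⟩ ?_
  · -- nonemptiness: φ = 1
    refine ⟨fun _ => 1, continuous_const, fun l ξ => rfl, fun ξ => one_pos, fun ξ => ?_⟩
    simp only [mul_one]
    have hIle : (∫ η, J (ξ - η) * Real.exp (∑ i, p i * (ξ i - η i)) * κ ξ η * 1) ≤ K := by
      have hGtrans : Integrable fun η => G (ξ - η) :=
        (integrable_comp_sub_left G ξ).mpr hGint
      have hnn : (0 : (Fin d → ℝ) → ℝ) ≤ᵐ[volume]
          fun η => J (ξ - η) * Real.exp (∑ i, p i * (ξ i - η i)) * κ ξ η * 1 :=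
        Filter.Eventually.of_forall fun η => by
          have := (hJbd (ξ - η)).1
          have := (hκpos ξ η).le
          positivity
      have hle : (fun η => J (ξ - η) * Real.exp (∑ i, p i * (ξ i - η i)) * κ ξ η * 1)
          ≤ᵐ[volume] fun η => G (ξ - η) :=
        Filter.Eventually.of_forall fun η => by
          simpa [mul_one] using key ξ η
      have hmono := integral_mono_of_nonneg hnn hGtrans hle
      rwa [integral_sub_left_eq_self G volume ξ] at hmono
    have := hxmin ξ
    simp only [mul_one] at hIle ⊢
    linarith
  · rintro lam ⟨φ, hφc, hφper, hφpos, hφineq⟩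
    refine le_ciInf fun ξ => ?_
    have hI : 0 ≤ ∫ η, J (ξ - η) * Real.exp (∑ i, p i * (ξ i - η i)) * κ ξ η * φ η :=
      integral_nonneg fun η => by
        have := (hJbd (ξ - η)).1
        have := (hκpos ξ η).le
        have := (hφpos η).le
        positivity
    have h := hφineq ξ
    have h2 : lam * φ ξ ≤ a ξ * φ ξ := by linarith
    exact le_of_mul_le_mul_right h2 (hφpos ξ)
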